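/- Uniqueness of dilation class: a linear system (φ, A, V) has exactly one equivalence class of linearly minimal homomorphism dilations if and only if M = {0}, where M = { Σᵢ cᵢ aᵢ⊗xᵢ ∈ A⊗V : Σᵢ cᵢ φ(a aᵢ)xᵢ = 0 for all a ∈ A }. (In particular, when M = {0} every linearly minimal dilation is equivalent to the universal dilation.) -/

import Mathlib

open scoped TensorProduct

variable (k : Type*) [Field k] (A : Type*) [Ring A] [Algebra k A]
  (V : Type*) [AddCommGroup V] [Module k V]

/-- The universal homomorphism `π_u(a)(b ⊗ x) = (ab) ⊗ x` on `A ⊗ V`. -/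
noncomputable def piU : A →ₐ[k] Module.End k (A ⊗[k] V) where
  toFun a := LinearMap.rTensor V (LinearMap.mulLeft k a)
  map_one' := by ext b v; simp
  map_mul' a b := by ext c v; simp [mul_assoc]
  map_zero' := by ext a v; simp
  map_add' a b := by ext c v; simp [add_mul, TensorProduct.add_tmul]
  commutes' c := by
    ext a v
    simp [Algebra.algebraMap_eq_smul_one, smul_mul_assoc, TensorProduct.smul_tmul']

/-- The universal analysis operator `T(x) = 1 ⊗ x`. -/
noncomputable def Tu : V →ₗ[k] A ⊗[k] V := TensorProduct.mk k A V 1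

/-- The universal synthesis operator `S(a ⊗ x) = φ(a) x`. -/
noncomputable def Su (φ : A →ₗ[k] Module.End k V) : A ⊗[k] V →ₗ[k] V :=
  TensorProduct.lift (φ : A →ₗ[k] V →ₗ[k] V)

/-- a linear system `(φ, A, V)` has exactly one equivalence class of
linearly minimal homomorphism dilations (equivalently, every linearly minimal dilation
is equivalent to the universal dilation) if and only if
`M = {Σ cᵢ aᵢ ⊗ xᵢ : Σ cᵢ φ(a aᵢ) xᵢ = 0 for all a} = {0}`. -/
theorem unique_dilation_class_iff (φ : A →ₗ[k] Module.End k V) (hφ : φ 1 = 1) :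
    (∀ (W₁ : Type (max u_1 u_2 u_3)) [AddCommGroup W₁] [Module k W₁],
      ∀ (π₁ : A →ₐ[k] Module.End k W₁) (T₁ : V →ₗ[k] W₁) (S₁ : W₁ →ₗ[k] V),
        Function.Injective T₁ → Function.Surjective S₁ →
        (∀ a : A, (φ a : V →ₗ[k] V) = S₁ ∘ₗ (π₁ a : W₁ →ₗ[k] W₁) ∘ₗ T₁) →
        Submodule.span k {w : W₁ | ∃ (a : A) (x : V), w = π₁ a (T₁ x)} = ⊤ →
        ∃ R : W₁ ≃ₗ[k] A ⊗[k] V,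
          (∀ x : V, R (T₁ x) = Tu k A V x) ∧
          (∀ w : W₁, Su k A V φ (R w) = S₁ w) ∧
          ∀ (a : A) (w : W₁), R (π₁ a w) = piU k A V a (R w)) ↔
      (⨅ a : A, LinearMap.ker ((Su k A V φ) ∘ₗ (piU k A V a : A ⊗[k] V →ₗ[k] A ⊗[k] V))) = ⊥ := by
  have piU_tmul : ∀ (a b : A) (x : V), piU k A V a (b ⊗ₜ[k] x) = (a * b) ⊗ₜ[k] x := by
    intro a b x; simp [piU]
  have Su_tmul : ∀ (a : A) (x : V), Su k A V φ (a ⊗ₜ[k] x) = φ a x := by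
    intro a x; simp [Su]
  have Tu_def : ∀ x : V, Tu k A V x = (1 : A) ⊗ₜ[k] x := fun x => rfl
  set M := ⨅ a : A, LinearMap.ker ((Su k A V φ) ∘ₗ (piU k A V a : A ⊗[k] V →ₗ[k] A ⊗[k] V))
    with hMdef
  have memM : ∀ u : A ⊗[k] V, u ∈ M ↔ ∀ a : A, Su k A V φ (piU k A V a u) = 0 := by
    intro u
    simp [hMdef, Submodule.mem_iInf, LinearMap.mem_ker]
  constructor
  · -- forward direction: build the quotient dilation
    intro H
    have hinv : ∀ b : A, M ≤ M.comap (piU k A V b : A ⊗[k] V →ₗ[k] A ⊗[k] V) := by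
      intro b u hu
      rw [Submodule.mem_comap, memM]
      intro a
      have := (memM u).1 hu (a * b)
      rwa [map_mul, Module.End.mul_apply] at this
    -- the quotient algebra hom
    let πb : A →ₐ[k] Module.End k (A ⊗[k] V ⧸ M) :=
      { toFun := fun a => Submodule.mapQ M M (piU k A V a) (hinv a)
        map_one' := by
          apply Submodule.linearMap_qext
          ext u
          simp [Submodule.mapQ_apply]
        map_mul' := fun a b => by
          apply Submodule.linearMap_qext
          ext u
          simp [Submodule.mapQ_apply, map_mul, Module.End.mul_apply]
        map_zero' := by
          apply Submodule.linearMap_qext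
          ext u
          simp [Submodule.mapQ_apply]
        map_add' := fun a b => by
          apply Submodule.linearMap_qext
          ext u
          simp [Submodule.mapQ_apply, map_add]
        commutes' := fun c => by
          apply Submodule.linearMap_qext
          ext u
          simp [Submodule.mapQ_apply, Module.algebraMap_end_apply] }
    have hπb : ∀ (a : A) (u : A ⊗[k] V),
        πb a (Submodule.Quotient.mk u) = Submodule.Quotient.mk (piU k A V a u) := by
      intro a u
      simp [πb, Submodule.mapQ_apply]
    let eU : ULift.{u_1} (A ⊗[k] V ⧸ M) ≃ₗ[k] (A ⊗[k] V ⧸ M) := ULift.moduleEquiv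
    let π₁ : A →ₐ[k] Module.End k (ULift.{u_1} (A ⊗[k] V ⧸ M)) :=
      (eU.symm.conjAlgEquiv k).toAlgHom.comp πb
    have hπ₁ : ∀ (a : A) (w : ULift.{u_1} (A ⊗[k] V ⧸ M)),
        π₁ a w = eU.symm (πb a (eU w)) := by
      intro a w; rfl
    let T₁ : V →ₗ[k] ULift.{u_1} (A ⊗[k] V ⧸ M) :=
      eU.symm.toLinearMap ∘ₗ M.mkQ ∘ₗ Tu k A V
    have hle : M ≤ LinearMap.ker (Su k A V φ) := by
      intro u hu
      have := (memM u).1 hu 1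
      rwa [map_one, Module.End.one_apply] at this
    let S₁ : ULift.{u_1} (A ⊗[k] V ⧸ M) →ₗ[k] V :=
      (M.liftQ (Su k A V φ) hle) ∘ₗ eU.toLinearMap
    have hT₁ : ∀ x : V, T₁ x = eU.symm (Submodule.Quotient.mk ((1 : A) ⊗ₜ[k] x)) := fun x => rfl
    have hS₁ : ∀ u : A ⊗[k] V,
        S₁ (eU.symm (Submodule.Quotient.mk u)) = Su k A V φ u := by
      intro u
      simp [S₁, eU, Submodule.liftQ_apply]
    have hTinj : Function.Injective T₁ := by
      intro x y hxy
      rw [hT₁, hT₁] at hxy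
      have h2 : Submodule.Quotient.mk ((1 : A) ⊗ₜ[k] x) =
          (Submodule.Quotient.mk ((1 : A) ⊗ₜ[k] y) : A ⊗[k] V ⧸ M) := eU.symm.injective hxy
      have h3 : (1 : A) ⊗ₜ[k] x - (1 : A) ⊗ₜ[k] y ∈ M :=
        (Submodule.Quotient.eq M).1 h2
      have h4 := (memM _).1 h3 1
      rw [map_one, Module.End.one_apply, map_sub, Su_tmul, Su_tmul, hφ] at h4
      simpa [sub_eq_zero] using h4
    have hSsurj : Function.Surjective S₁ := by
      intro v
      refine ⟨eU.symm (Submodule.Quotient.mk ((1 : A) ⊗ₜ[k] v)), ?_⟩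
      rw [hS₁, Su_tmul, hφ]; rfl
    have hdil : ∀ a : A, (φ a : V →ₗ[k] V) =
        S₁ ∘ₗ (π₁ a : _ →ₗ[k] _) ∘ₗ T₁ := by
      intro a
      ext x
      simp only [LinearMap.comp_apply, hT₁, hπ₁]
      rw [LinearEquiv.apply_symm_apply, hπb, hS₁, piU_tmul, mul_one, Su_tmul]
    have hspan : Submodule.span k
        {w : ULift.{u_1} (A ⊗[k] V ⧸ M) | ∃ (a : A) (x : V), w = π₁ a (T₁ x)} = ⊤ := by
      rw [eq_top_iff]
      rintro w -
      have key : ∀ u : A ⊗[k] V,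
          eU.symm (Submodule.Quotient.mk u) ∈ Submodule.span k
            {w : ULift.{u_1} (A ⊗[k] V ⧸ M) | ∃ (a : A) (x : V), w = π₁ a (T₁ x)} := by
        intro u
        induction u using TensorProduct.induction_on with
        | zero => simp
        | tmul a x =>
          apply Submodule.subset_span
          refine ⟨a, x, ?_⟩
          rw [hπ₁, hT₁, LinearEquiv.apply_symm_apply, hπb, piU_tmul, mul_one]
        | add u v hu hv =>
          have : eU.symm (Submodule.Quotient.mk (u + v)) =
              eU.symm (Submodule.Quotient.mk u) + eU.symm (Submodule.Quotient.mk v) := by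
            rw [Submodule.Quotient.mk_add, map_add]
          rw [this]
          exact Submodule.add_mem _ hu hv
      obtain ⟨q, hq⟩ := Submodule.Quotient.mk_surjective M (eU w)
      have : w = eU.symm (Submodule.Quotient.mk q) := by
        rw [hq, LinearEquiv.symm_apply_apply]
      rw [this]
      exact key q
    obtain ⟨R, hRT, _, hRπ⟩ := H (ULift.{u_1} (A ⊗[k] V ⧸ M)) π₁ T₁ S₁ hTinj hSsurj hdil hspan
    have hg : ∀ u : A ⊗[k] V, R (eU.symm (Submodule.Quotient.mk u)) = u := by
      have heq : (R.toLinearMap ∘ₗ eU.symm.toLinearMap ∘ₗ M.mkQ : A ⊗[k] V →ₗ[k] A ⊗[k] V)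
          = LinearMap.id := by
        apply TensorProduct.ext'
        intro a x
        simp only [LinearMap.comp_apply, LinearEquiv.coe_coe, LinearMap.id_apply,
          Submodule.mkQ_apply]
        have h1 : (Submodule.Quotient.mk (a ⊗ₜ[k] x) : A ⊗[k] V ⧸ M)
            = πb a (Submodule.Quotient.mk ((1 : A) ⊗ₜ[k] x)) := by
          rw [hπb, piU_tmul, mul_one]
        rw [h1]
        have h2 : eU.symm (πb a (Submodule.Quotient.mk ((1 : A) ⊗ₜ[k] x)))
            = π₁ a (T₁ x) := by
          rw [hπ₁, hT₁, LinearEquiv.apply_symm_apply]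
        rw [h2, hRπ, hRT, Tu_def, piU_tmul, mul_one]
      intro u
      exact congrFun (congrArg DFunLike.coe heq) u
    rw [eq_bot_iff]
    intro u hu
    have h0 : (Submodule.Quotient.mk u : A ⊗[k] V ⧸ M) = 0 :=
      (Submodule.Quotient.mk_eq_zero M).2 hu
    have := hg u
    rw [h0] at this
    simpa using this.symm
  · -- backward direction
    intro hM0 W₁ _ _ π₁ T₁ S₁ hTinj hSsurj hdil hspan
    let L : A →ₗ[k] V →ₗ[k] W₁ := (LinearMap.lcomp k W₁ T₁) ∘ₗ π₁.toLinearMap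
    let Φ : A ⊗[k] V →ₗ[k] W₁ := TensorProduct.lift L
    have hΦ : ∀ (a : A) (x : V), Φ (a ⊗ₜ[k] x) = π₁ a (T₁ x) := fun a x => rfl
    have hsurj : Function.Surjective Φ := by
      rw [← LinearMap.range_eq_top, ← top_le_iff, ← hspan, Submodule.span_le]
      rintro w ⟨a, x, rfl⟩
      exact ⟨a ⊗ₜ[k] x, rfl⟩
    have key : ∀ a : A, (Su k A V φ) ∘ₗ (piU k A V a : A ⊗[k] V →ₗ[k] A ⊗[k] V)
        = S₁ ∘ₗ (π₁ a : W₁ →ₗ[k] W₁) ∘ₗ Φ := by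
      intro a
      apply TensorProduct.ext'
      intro b x
      have h2 := congrFun (congrArg DFunLike.coe (hdil (a * b))) x
      simp only [LinearMap.comp_apply] at h2 ⊢
      rw [piU_tmul, Su_tmul, hΦ, h2, ← Module.End.mul_apply, ← map_mul]
    have hinj : Function.Injective Φ := by
      rw [← LinearMap.ker_eq_bot, eq_bot_iff]
      intro u hu
      have hu0 : Φ u = 0 := hu
      have : u ∈ M := by
        rw [memM]
        intro a
        have := congrFun (congrArg DFunLike.coe (key a)) u
        simp only [LinearMap.comp_apply] at this
        rw [this, hu0, map_zero, map_zero]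
      rw [hM0] at this
      exact this
    let e := LinearEquiv.ofBijective Φ ⟨hinj, hsurj⟩
    have he : ∀ u : A ⊗[k] V, e u = Φ u := fun u => rfl
    refine ⟨e.symm, ?_, ?_, ?_⟩
    · intro x
      rw [LinearEquiv.symm_apply_eq, he, Tu_def, hΦ, map_one, Module.End.one_apply]
    · intro w
      obtain ⟨u, rfl⟩ := hsurj w
      have h1 : e.symm (Φ u) = u := by
        rw [← he, LinearEquiv.symm_apply_apply]
      rw [h1]
      have := congrFun (congrArg DFunLike.coe (key 1)) u
      simp only [LinearMap.comp_apply, map_one, Module.End.one_apply] at this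
      exact this
    · intro a w
      obtain ⟨u, rfl⟩ := hsurj w
      have h1 : e.symm (Φ u) = u := by
        rw [← he, LinearEquiv.symm_apply_apply]
      rw [h1]
      have comm : π₁ a (Φ u) = Φ (piU k A V a u) := by
        have : (π₁ a : W₁ →ₗ[k] W₁) ∘ₗ Φ
            = Φ ∘ₗ (piU k A V a : A ⊗[k] V →ₗ[k] A ⊗[k] V) := by
          apply TensorProduct.ext'
          intro b x
          simp only [LinearMap.comp_apply]
          rw [hΦ, piU_tmul, hΦ, ← Module.End.mul_apply, ← map_mul]
        have := congrFun (congrArg DFunLike.coe this) u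
        simpa using this
      rw [comm, LinearEquiv.symm_apply_eq, he]
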